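/- Let A be the adjacency matrix of a strongly connected k-regular normal digraph Γ on n vertices, and let θ_min be the minimum of the real parts of the eigenvalues of A. Then every coclique C of Γ satisfies |C| ≤ n(−θ_min)/(k − θ_min). -/

import Mathlib

open Matrix Finset

-- spectrum of transpose ⊆ spectrum
lemma spec_transpose {F : Type*} [Field F] {n : ℕ} (M : Matrix (Fin n) (Fin n) F)
    {z : F} (hz : z ∈ spectrum F Mᵀ) : z ∈ spectrum F M := by
  rw [spectrum.mem_iff] at hz ⊢
  intro h
  apply hz
  rw [Matrix.isUnit_iff_isUnit_det] at h ⊢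
  have : (algebraMap F (Matrix (Fin n) (Fin n) F) z - Mᵀ) = (algebraMap F (Matrix (Fin n) (Fin n) F) z - M)ᵀ := by
    rw [Matrix.transpose_sub, Algebra.algebraMap_eq_smul_one]
    simp
  rw [this, Matrix.det_transpose]
  exact h

-- real spectrum to complex spectrum
lemma spec_map {n : ℕ} (M : Matrix (Fin n) (Fin n) ℝ) {μ : ℝ} (hμ : μ ∈ spectrum ℝ M) :
    (μ : ℂ) ∈ spectrum ℂ (M.map Complex.ofReal) := by
  rw [spectrum.mem_iff] at hμ ⊢
  intro h
  apply hμ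
  rw [Matrix.isUnit_iff_isUnit_det, isUnit_iff_ne_zero] at h ⊢
  intro hdet
  apply h
  have key : (algebraMap ℂ (Matrix (Fin n) (Fin n) ℂ) (μ : ℂ) - M.map Complex.ofReal)
      = (algebraMap ℝ (Matrix (Fin n) (Fin n) ℝ) μ - M).map Complex.ofReal := by
    ext i j
    simp [Matrix.algebraMap_matrix_apply, apply_ite]
  have h2 : (((algebraMap ℝ (Matrix (Fin n) (Fin n) ℝ)) μ - M).map Complex.ofReal).det
      = Complex.ofRealHom ((algebraMap ℝ (Matrix (Fin n) (Fin n) ℝ)) μ - M).det :=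
    (RingHom.map_det Complex.ofRealHom _).symm
  rw [key, h2, hdet, map_zero]

lemma mem_spec_of_mulVec {n : ℕ} (M : Matrix (Fin n) (Fin n) ℂ) {θ : ℂ} {w : Fin n → ℂ}
    (hw : w ≠ 0) (h : M *ᵥ w = θ • w) : θ ∈ spectrum ℂ M := by
  have h1 : Module.End.HasEigenvalue (Matrix.toLin' M) θ :=
    Module.End.hasEigenvalue_of_hasEigenvector
      ⟨Module.End.mem_eigenspace_iff.mpr (by simpa [Matrix.toLin'_apply] using h), hw⟩
  have h2 := Module.End.hasEigenvalue_iff_mem_spectrum.mp h1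
  rwa [show Matrix.toLin' M = Matrix.toLinAlgEquiv' M from rfl, AlgEquiv.spectrum_eq] at h2

lemma key_spec {n : ℕ} (A : Matrix (Fin n) (Fin n) ℝ) (θmin : ℝ)
    (hnormal : A * Aᵀ = Aᵀ * A)
    (hmin_le : ∀ θ ∈ spectrum ℂ (A.map Complex.ofReal), θmin ≤ θ.re)
    {μ : ℝ} (hμ : μ ∈ spectrum ℝ (A + Aᵀ)) : 2 * θmin ≤ μ := by
  set Ac := A.map Complex.ofReal with hAcdef
  have hmapB : (A + Aᵀ).map Complex.ofReal = Ac + Acᵀ := by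
    ext i j; simp [hAcdef]
  have hμC : (μ : ℂ) ∈ spectrum ℂ (Ac + Acᵀ) := by
    have := spec_map (A + Aᵀ) hμ; rwa [hmapB] at this
  have h1 : Ac * Acᵀ = Acᵀ * Ac := by
    have h := congrArg (fun M => Matrix.map M Complex.ofReal) hnormal
    have e1 : (A * Aᵀ).map Complex.ofReal = Ac * Acᵀ := by
      ext i j
      simp [hAcdef, Matrix.map_apply, Matrix.mul_apply]
    have e2 : (Aᵀ * A).map Complex.ofReal = Acᵀ * Ac := by
      ext i j
      simp [hAcdef, Matrix.map_apply, Matrix.mul_apply]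
    rw [e1, e2] at h; exact h
  have hcomm : Ac * (Ac + Acᵀ) = (Ac + Acᵀ) * Ac := by
    rw [mul_add, add_mul, h1]
  set T := Matrix.toLin' (Ac + Acᵀ) with hT
  set S := Matrix.toLin' Ac with hS
  have hμT : Module.End.HasEigenvalue T (μ : ℂ) := by
    rw [Module.End.hasEigenvalue_iff_mem_spectrum]
    rwa [show T = Matrix.toLinAlgEquiv' (Ac + Acᵀ) from rfl, AlgEquiv.spectrum_eq]
  have hE : Module.End.eigenspace T (μ : ℂ) ≠ ⊥ := hμT
  haveI : Nontrivial (Module.End.eigenspace T (μ : ℂ)) :=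
    Submodule.nontrivial_iff_ne_bot.mpr hE
  have hSE : ∀ v ∈ Module.End.eigenspace T (μ : ℂ), S v ∈ Module.End.eigenspace T (μ : ℂ) := by
    intro v hv
    rw [Module.End.mem_eigenspace_iff] at hv ⊢
    have hTS : T (S v) = S (T v) := by
      simp only [hT, hS, Matrix.toLin'_apply, Matrix.mulVec_mulVec, hcomm]
    rw [hTS, hv, _root_.map_smul]
  obtain ⟨θ, hθ⟩ := Module.End.exists_eigenvalue (S.restrict hSE)
  obtain ⟨w', hw'⟩ := hθ.exists_hasEigenvector
  set w : Fin n → ℂ := (w' : Fin n → ℂ) with hwdef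
  have hw0 : w ≠ 0 := by
    simpa [hwdef, Submodule.coe_eq_zero] using hw'.right
  have hAw : Ac *ᵥ w = θ • w := by
    have h := congrArg Subtype.val hw'.apply_eq_smul
    simpa [LinearMap.restrict_coe_apply, hS, Matrix.toLin'_apply, hwdef] using h
  have hBw : (Ac + Acᵀ) *ᵥ w = (μ : ℂ) • w := by
    have h := w'.2
    rw [Module.End.mem_eigenspace_iff] at h
    simpa [hT, Matrix.toLin'_apply, hwdef, Matrix.add_mulVec] using h
  have hATw : Acᵀ *ᵥ w = ((μ : ℂ) - θ) • w := by
    have h := hBw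
    rw [Matrix.add_mulVec, hAw] at h
    rw [sub_smul, ← h]; abel
  have hθ1 : θmin ≤ θ.re := hmin_le θ (mem_spec_of_mulVec Ac hw0 hAw)
  have hθ2 : θmin ≤ ((μ : ℂ) - θ).re :=
    hmin_le _ (spec_transpose Ac (mem_spec_of_mulVec Acᵀ hw0 hATw))
  rw [Complex.sub_re, Complex.ofReal_re] at hθ2
  linarith

/-- Hoffman's coclique bound for strongly connected regular normal digraphs. -/
theorem hoffman_coclique_bound
    (N : ℕ) (k θmin : ℝ) (A : Matrix (Fin N) (Fin N) ℝ)
    (h01 : ∀ i j, A i j = 0 ∨ A i j = 1)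
    (hdiag : ∀ i, A i i = 0)
    (hnormal : A * Aᵀ = Aᵀ * A)
    (hrow : ∀ i, ∑ j, A i j = k)
    (hcol : ∀ i, ∑ j, A j i = k)
    (hconn : ∀ i j : Fin N, Relation.ReflTransGen (fun x y => A x y = 1) i j)
    (hedge : ∃ i j, A i j = 1)
    (hmin_mem : ∃ θ ∈ spectrum ℂ (A.map Complex.ofReal), θ.re = θmin)
    (hmin_le : ∀ θ ∈ spectrum ℂ (A.map Complex.ofReal), θmin ≤ θ.re)
    (C : Finset (Fin N))
    (hC : ∀ x ∈ C, ∀ y ∈ C, A x y = 0) :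
    (C.card : ℝ) ≤ (N : ℝ) * (-θmin) / (k - θmin) := by
  classical
  obtain ⟨i0, j0, hij⟩ := hedge
  have hNpos : 0 < N := i0.pos
  have hAnn : ∀ x y, 0 ≤ A x y := by
    intro x y; rcases h01 x y with h | h <;> rw [h] <;> norm_num
  have hk1 : (1 : ℝ) ≤ k := by
    have := Finset.single_le_sum (f := fun j => A i0 j) (fun j _ => hAnn i0 j)
      (Finset.mem_univ j0)
    rw [hrow i0] at this
    calc (1:ℝ) = A i0 j0 := hij.symm
    _ ≤ k := this
  set τ := 2 * θmin with hτdef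
  set B := A + Aᵀ with hBdef
  set M := B - τ • (1 : Matrix (Fin N) (Fin N) ℝ) with hMdef
  have hBH : B.IsHermitian := by
    rw [Matrix.IsHermitian]
    ext i j
    simp [hBdef, Matrix.conjTranspose_apply, Matrix.transpose_apply, add_comm]
  have hMH : M.IsHermitian := by
    rw [Matrix.IsHermitian, hMdef, Matrix.conjTranspose_sub, hBH]
    congr 1
    ext i j
    simp [Matrix.conjTranspose_apply, Matrix.one_apply, eq_comm]
  have hspec : ∀ {μ : ℝ}, μ ∈ spectrum ℝ B → τ ≤ μ := by
    intro μ h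
    exact key_spec A θmin hnormal hmin_le (by rwa [← hBdef])
  have heig : ∀ i, 0 ≤ hMH.eigenvalues i := by
    intro i
    have h1 := hMH.eigenvalues_mem_spectrum_real i
    set x := hMH.eigenvalues i with hx
    have h2 : x + τ ∈ spectrum ℝ B := by
      rw [spectrum.mem_iff] at h1 ⊢
      have e : (algebraMap ℝ (Matrix (Fin N) (Fin N) ℝ)) (x + τ) - B
          = (algebraMap ℝ (Matrix (Fin N) (Fin N) ℝ)) x - M := by
        rw [map_add, hMdef, Algebra.algebraMap_eq_smul_one (A := Matrix (Fin N) (Fin N) ℝ) τ]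
        abel
      rw [e]
      exact h1
    have := hspec h2
    linarith
  have hPSD := hMH.posSemidef_iff_eigenvalues_nonneg.mpr heig
  have hquad : ∀ v : Fin N → ℝ, 0 ≤ v ⬝ᵥ (M *ᵥ v) := by
    intro v
    simpa using hPSD.dotProduct_mulVec_nonneg v
  have hsym : ∀ u w : Fin N → ℝ, u ⬝ᵥ (Aᵀ *ᵥ w) = w ⬝ᵥ (A *ᵥ u) := by
    intro u w
    rw [Matrix.mulVec_transpose, dotProduct_comm, ← Matrix.dotProduct_mulVec]
  have hMquad : ∀ u w : Fin N → ℝ,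
      u ⬝ᵥ (M *ᵥ w) = u ⬝ᵥ (A *ᵥ w) + w ⬝ᵥ (A *ᵥ u) - τ * (u ⬝ᵥ w) := by
    intro u w
    rw [hMdef, hBdef, Matrix.sub_mulVec, Matrix.add_mulVec, dotProduct_sub, dotProduct_add,
      hsym, Matrix.smul_mulVec, Matrix.one_mulVec, dotProduct_smul, smul_eq_mul]
  -- θmin is negative
  have hij' : i0 ≠ j0 := by
    intro h
    rw [h, hdiag j0] at hij
    exact zero_ne_one hij
  have hτneg : τ ≤ -1 := by
    set e : Fin N → ℝ := Pi.single i0 1 - Pi.single j0 1 with hedef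
    have h0 := hquad e
    rw [hMquad] at h0
    have hee : e ⬝ᵥ e = 2 := by
      simp [hedef, sub_dotProduct, dotProduct_sub, single_dotProduct,
        dotProduct_single, Pi.single_apply, hij', hij'.symm]
      norm_num
    have hAe : e ⬝ᵥ (A *ᵥ e) = -1 - A j0 i0 := by
      simp [hedef, sub_dotProduct, dotProduct_sub, Matrix.mulVec_sub,
        Matrix.mulVec_single, single_dotProduct, hdiag, hij]
      ring
    rw [hAe, hee] at h0
    have := hAnn j0 i0
    linarith
  have hθneg : θmin ≤ -(1/2) := by rw [hτdef] at hτneg; linarith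
  have hkpos : 0 < k - θmin := by linarith
  -- the indicator vector computations
  set n : ℝ := (N : ℝ) with hn
  have hnpos : 0 < n := by rw [hn]; exact Nat.cast_pos.mpr hNpos
  set c : ℝ := (C.card : ℝ) with hc
  have hc0 : 0 ≤ c := by positivity
  set χ : Fin N → ℝ := fun x => if x ∈ C then 1 else 0 with hχdef
  set o : Fin N → ℝ := fun _ => 1 with hodef
  have hχd : ∀ f : Fin N → ℝ, χ ⬝ᵥ f = ∑ x ∈ C, f x := by
    intro f
    simp [dotProduct, hχdef, ite_mul, one_mul, zero_mul, Finset.sum_ite_mem]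
  have hdχ : ∀ f : Fin N → ℝ, f ⬝ᵥ χ = ∑ x ∈ C, f x := by
    intro f
    simp [dotProduct, hχdef, mul_ite, mul_one, mul_zero, Finset.sum_ite_mem]
  have hAo : A *ᵥ o = fun _ => k := by
    funext x
    simp [Matrix.mulVec, dotProduct, hodef, hrow x]
  have hoA : o ᵥ* A = fun _ => k := by
    funext y
    simp [Matrix.vecMul, dotProduct, hodef, hcol y]
  have hQχχ : χ ⬝ᵥ (A *ᵥ χ) = 0 := by
    rw [hχd]
    apply Finset.sum_eq_zero
    intro x hx
    show (A x) ⬝ᵥ χ = 0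
    rw [hdχ]
    exact Finset.sum_eq_zero fun y hy => hC x hx y hy
  have hQχo : χ ⬝ᵥ (A *ᵥ o) = k * c := by
    rw [hAo, hχd]
    simp [hc, mul_comm]
  have hQoχ : o ⬝ᵥ (A *ᵥ χ) = k * c := by
    rw [Matrix.dotProduct_mulVec, hoA, hdχ]
    simp [hc, mul_comm]
  have hQoo : o ⬝ᵥ (A *ᵥ o) = k * n := by
    rw [hAo]
    simp [dotProduct, hodef, hn, mul_comm]
  have hχχ : χ ⬝ᵥ χ = c := by
    rw [hχd]; simp [hχdef, hc]
  have hχo : χ ⬝ᵥ o = c := by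
    rw [hχd]; simp [hodef, hc]
  have hoχ : o ⬝ᵥ χ = c := by
    rw [hdχ]; simp [hodef, hc]
  have hoo : o ⬝ᵥ o = n := by
    simp [dotProduct, hodef, hn]
  -- the key vector
  have hn0 : n ≠ 0 := ne_of_gt hnpos
  set v : Fin N → ℝ := χ - (c / n) • o with hvdef
  have h0 := hquad v
  rw [hMquad] at h0
  have hAvv : v ⬝ᵥ (A *ᵥ v) = -(k * c * c) / n := by
    simp only [hvdef, Matrix.mulVec_sub, Matrix.mulVec_smul, sub_dotProduct, dotProduct_sub,
      dotProduct_smul, smul_dotProduct, smul_eq_mul, hQχχ, hQχo, hQoχ, hQoo]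
    field_simp
    ring
  have hvv : v ⬝ᵥ v = c - c * c / n := by
    simp only [hvdef, sub_dotProduct, dotProduct_sub, dotProduct_smul, smul_dotProduct,
      smul_eq_mul, hχχ, hχo, hoχ, hoo]
    field_simp
    ring
  rw [hAvv, hvv, hτdef] at h0
  have h2 : 0 ≤ -2 * (k * c * c) - 2 * θmin * (c * n - c * c) := by
    have e : -(k * c * c) / n + -(k * c * c) / n - 2 * θmin * (c - c * c / n)
        = (-2 * (k * c * c) - 2 * θmin * (c * n - c * c)) / n := by
      field_simp
      ring
    rw [e] at h0
    have := (le_div_iff₀ hnpos).mp h0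
    linarith
  -- conclude
  rcases eq_or_lt_of_le hc0 with hczero | hcpos
  · rw [← hczero]
    have hθ0 : 0 ≤ -θmin := by linarith
    exact div_nonneg (mul_nonneg hnpos.le hθ0) hkpos.le
  · rw [le_div_iff₀ hkpos]
    nlinarith [h2, hcpos, mul_pos hcpos hcpos]
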